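/- If ρ(Σ) < 1 for a finite set of matrices Σ, then every trajectory of the switched linear system x_{k+1} = A_{σ(k)} x_k converges to zero, for every initial condition x_0 and every switching signal σ: ℕ → ⟨M⟩. -/

import Mathlib

open Filter

lemma ofFn_reverse' {α : Type*} {k : ℕ} (f : Fin k → α) :
    (List.ofFn f).reverse = List.ofFn (fun i => f i.rev) := by
  apply List.ext_getElem
  · simp
  · intro i h1 h2
    simp only [List.getElem_reverse, List.getElem_ofFn, List.length_ofFn]
    congr 1
    apply Fin.ext
    simp [Fin.rev]
    omega


lemma tendsto_zero_of_absNorm_tendsto_zero {E : Type*} [NormedAddCommGroup E]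
    [NormedSpace ℝ E] [FiniteDimensional ℝ E]
    (N : E → ℝ) (hnonneg : ∀ x, 0 ≤ N x) (hdef : ∀ x, N x = 0 ↔ x = 0)
    (htri : ∀ x y, N (x + y) ≤ N x + N y) (hhom : ∀ (c : ℝ) x, N (c • x) = |c| * N x)
    {u : ℕ → E} (h : Tendsto (fun k => N (u k)) atTop (nhds 0)) :
    Tendsto u atTop (nhds 0) := by
  classical
  have hN0 : N 0 = 0 := (hdef 0).2 rfl
  have hsum : ∀ {ι : Type} (s : Finset ι) (f : ι → E),
      N (∑ i ∈ s, f i) ≤ ∑ i ∈ s, N (f i) := by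
    intro ι s f
    induction s using Finset.cons_induction with
    | empty => simp [hN0]
    | cons a s ha ih =>
      rw [Finset.sum_cons, Finset.sum_cons]
      exact (htri _ _).trans (by linarith)
  obtain ⟨C, hC0, hCle⟩ : ∃ C : ℝ, 0 ≤ C ∧ ∀ x, N x ≤ C * ‖x‖ := by
    set b := Module.finBasis ℝ E with hb
    set cl : Fin (Module.finrank ℝ E) → (E →L[ℝ] ℝ) :=
      fun i => LinearMap.toContinuousLinearMap (b.coord i) with hcl
    refine ⟨∑ i, ‖cl i‖ * N (b i),
      Finset.sum_nonneg fun i _ => mul_nonneg (norm_nonneg _) (hnonneg _), fun x => ?_⟩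
    calc N x = N (∑ i, b.repr x i • b i) := by rw [b.sum_repr]
    _ ≤ ∑ i, N (b.repr x i • b i) := hsum _ _
    _ = ∑ i, |b.repr x i| * N (b i) := by simp [hhom]
    _ ≤ ∑ i, (‖cl i‖ * ‖x‖) * N (b i) := by
        refine Finset.sum_le_sum fun i _ => ?_
        refine mul_le_mul_of_nonneg_right ?_ (hnonneg _)
        have := (cl i).le_opNorm x
        simpa [hcl, Real.norm_eq_abs] using this
    _ = (∑ i, ‖cl i‖ * N (b i)) * ‖x‖ := by
        rw [Finset.sum_mul]; exact Finset.sum_congr rfl fun i _ => by ring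
  have hneg : ∀ x : E, N (-x) = N x := by
    intro x
    have := hhom (-1) x
    simpa using this
  have hcont : Continuous N := by
    rw [Metric.continuous_iff]
    intro x ε hε
    by_cases hC : C = 0
    · refine ⟨1, one_pos, fun y _ => ?_⟩
      have h1 := hCle (y - x)
      have h2 : N (y - x) = 0 := le_antisymm (by simpa [hC] using h1) (hnonneg _)
      have h3 : N y ≤ N x := by
        have := htri x (y - x); simpa [h2] using this
      have h4 : N x ≤ N y := by
        have := htri y (x - y)
        have h5 : N (x - y) = 0 := by rw [← neg_sub y x, hneg, h2]
        simpa [h5] using this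
      simpa [Real.dist_eq, le_antisymm h3 h4] using hε
    have hCpos : 0 < C := lt_of_le_of_ne hC0 (Ne.symm hC)
    refine ⟨ε / C, by positivity, fun y hy => ?_⟩
    have h1 : N y ≤ N x + N (y - x) := by have := htri x (y - x); simpa using this
    have h2 : N x ≤ N y + N (x - y) := by have := htri y (x - y); simpa using this
    have h3 : N (y - x) ≤ C * ‖y - x‖ := hCle _
    have h4 : N (x - y) = N (y - x) := by rw [← neg_sub y x, hneg]
    have h5 : ‖y - x‖ < ε / C := by rwa [dist_eq_norm] at hy
    have h6 : C * ‖y - x‖ < ε := by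
      have := (lt_div_iff₀ hCpos).1 h5
      linarith [mul_comm C ‖y - x‖]
    rw [Real.dist_eq, abs_lt]
    constructor <;> linarith
  by_cases htriv : ∀ x : E, x = 0
  · have hu : u = fun _ => 0 := funext fun k => htriv _
    rw [hu]
    exact tendsto_const_nhds
  push_neg at htriv
  obtain ⟨x₀, hx₀⟩ := htriv
  obtain ⟨z, hz, hzmin⟩ : ∃ z ∈ Metric.sphere (0 : E) 1, ∀ y ∈ Metric.sphere (0 : E) 1,
      N z ≤ N y := by
    have hcomp : IsCompact (Metric.sphere (0 : E) 1) := isCompact_sphere 0 1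
    have hne : (Metric.sphere (0 : E) 1).Nonempty := by
      refine ⟨‖x₀‖⁻¹ • x₀, ?_⟩
      simp [norm_smul, inv_mul_cancel₀ (norm_ne_zero_iff.mpr hx₀)]
    obtain ⟨z, hz, hzmin⟩ := hcomp.exists_isMinOn hne hcont.continuousOn
    exact ⟨z, hz, fun y hy => hzmin hy⟩
  have hzne : z ≠ 0 := by
    intro hzz
    rw [hzz] at hz
    simp at hz
  have hNzne : N z ≠ 0 := fun hh => hzne ((hdef z).1 hh)
  have hcpos : 0 < N z := lt_of_le_of_ne (hnonneg z) (Ne.symm hNzne)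
  have hlow : ∀ x : E, N z * ‖x‖ ≤ N x := by
    intro x
    by_cases hx : x = 0
    · simp [hx, hN0]
    have hnx : ‖x‖ ≠ 0 := norm_ne_zero_iff.mpr hx
    have hpos : (0:ℝ) < ‖x‖ := lt_of_le_of_ne (norm_nonneg x) (Ne.symm hnx)
    have hmem : ‖x‖⁻¹ • x ∈ Metric.sphere (0 : E) 1 := by
      simp [norm_smul, inv_mul_cancel₀ hnx]
    have h1 : N z ≤ N (‖x‖⁻¹ • x) := hzmin _ hmem
    have h2 : N (‖x‖⁻¹ • x) = ‖x‖⁻¹ * N x := by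
      rw [hhom]; congr 1; rw [abs_of_nonneg (by positivity)]
    rw [h2] at h1
    calc N z * ‖x‖ ≤ (‖x‖⁻¹ * N x) * ‖x‖ := by nlinarith
    _ = N x := by field_simp
  rw [tendsto_zero_iff_norm_tendsto_zero]
  refine squeeze_zero (g := fun k => (N z)⁻¹ * N (u k)) (fun k => norm_nonneg _)
    (fun k => ?_) ?_
  · refine le_of_mul_le_mul_left ?_ hcpos
    calc N z * ‖u k‖ ≤ N (u k) := hlow _
    _ = N z * ((N z)⁻¹ * N (u k)) := by field_simp
  · simpa using h.const_mul (N z)⁻¹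

/-- If the joint spectral radius is less than one, then every trajectory of the
switched linear system `x_{k+1} = A_{σ(k)} x_k` converges to zero, for every
initial condition and every switching signal. -/
theorem switched_system_stable_of_jsr_lt_one {n M : ℕ} (hM : 0 < M)
    (A : Fin M → Matrix (Fin n) (Fin n) ℝ)
    (N : Matrix (Fin n) (Fin n) ℝ → ℝ)
    (hnonneg : ∀ B, 0 ≤ N B)
    (hdef : ∀ B, N B = 0 ↔ B = 0)
    (htri : ∀ B C, N (B + C) ≤ N B + N C)
    (hhom : ∀ (c : ℝ) (B), N (c • B) = |c| * N B)
    (hsub : ∀ B C, N (B * C) ≤ N B * N C)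
    (hρ : Filter.atTop.limsup (fun k : ℕ =>
        ⨆ s : Fin k → Fin M, N ((List.ofFn fun i => A (s i)).prod) ^ ((1 : ℝ) / k)) < 1) :
    ∀ (x0 : Fin n → ℝ) (σ : ℕ → Fin M),
      Filter.Tendsto
        (fun k : ℕ => ((List.ofFn fun i : Fin k => A (σ i)).reverse.prod).mulVec x0)
        Filter.atTop (nhds 0) := by
  intro x0 σ
  haveI : Nonempty (Fin M) := ⟨⟨0, hM⟩⟩
  set f : ℕ → ℝ := fun k =>
    ⨆ s : Fin k → Fin M, N ((List.ofFn fun i => A (s i)).prod) ^ ((1 : ℝ) / k) with hf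
  set C0 : ℝ := 1 + ∑ i, N (A i) with hC0def
  have hsum0 : (0:ℝ) ≤ ∑ i, N (A i) := Finset.sum_nonneg fun i _ => hnonneg _
  have hC0one : (1:ℝ) ≤ C0 := by rw [hC0def]; linarith
  have hC0pos : (0:ℝ) < C0 := lt_of_lt_of_le one_pos hC0one
  have hAle : ∀ i, N (A i) ≤ C0 := by
    intro i
    have h1 : N (A i) ≤ ∑ j, N (A j) :=
      Finset.single_le_sum (fun j _ => hnonneg _) (Finset.mem_univ i)
    rw [hC0def]; linarith
  have hprod : ∀ (j : ℕ) (s : Fin (j+1) → Fin M),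
      N ((List.ofFn fun i => A (s i)).prod) ≤ C0 ^ (j+1) := by
    intro j
    induction j with
    | zero => intro s; simpa using hAle (s 0)
    | succ j ih =>
      intro s
      rw [List.ofFn_succ, List.prod_cons]
      calc N (A (s 0) * (List.ofFn fun i => A (s i.succ)).prod)
          ≤ N (A (s 0)) * N ((List.ofFn fun i => A (s i.succ)).prod) := hsub _ _
        _ ≤ C0 * C0 ^ (j+1) :=
            mul_le_mul (hAle _) (ih fun i => s i.succ) (hnonneg _) hC0pos.le
        _ = C0 ^ (j+1+1) := by ring
  have hfle : ∀ k : ℕ, 1 ≤ k → f k ≤ C0 := by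
    intro k hk
    obtain ⟨j, rfl⟩ : ∃ j, k = j + 1 := ⟨k - 1, by omega⟩
    refine ciSup_le fun s => ?_
    have h1 := hprod j s
    have h2 : N ((List.ofFn fun i => A (s i)).prod) ^ ((1:ℝ)/((j+1:ℕ):ℝ))
        ≤ (C0 ^ (j+1)) ^ ((1:ℝ)/((j+1:ℕ):ℝ)) :=
      Real.rpow_le_rpow (hnonneg _) h1 (by positivity)
    refine h2.trans ?_
    rw [← Real.rpow_natCast C0 (j+1), ← Real.rpow_mul hC0pos.le, mul_one_div,
      div_self (by positivity : ((j+1:ℕ):ℝ) ≠ 0), Real.rpow_one]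
  have hbdd : IsBoundedUnder (· ≤ ·) atTop f := by
    refine ⟨C0, ?_⟩
    rw [eventually_map]
    filter_upwards [eventually_ge_atTop 1] with k hk using hfle k hk
  obtain ⟨r, hr1, hr2⟩ := exists_between hρ
  have hev : ∀ᶠ k in atTop, f k < r := eventually_lt_of_limsup_lt hr1 hbdd
  set r2 : ℝ := max r 0 with hr2def
  have hr2lt : r2 < 1 := max_lt hr2 one_pos
  have hr20 : 0 ≤ r2 := le_max_right _ _
  set B : ℕ → Matrix (Fin n) (Fin n) ℝ :=
    fun k => (List.ofFn fun i : Fin k => A (σ i)).reverse.prod with hBdef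
  have hBs : ∀ k, B k = (List.ofFn fun i : Fin k => A ((fun i : Fin k => σ i.rev) i)).prod := by
    intro k
    rw [hBdef]
    simp only
    rw [ofFn_reverse']
  have hNB : ∀ᶠ k in atTop, N (B k) ≤ r2 ^ k := by
    filter_upwards [hev, eventually_ge_atTop 1] with k hk hk1
    have hle : N (B k) ^ ((1:ℝ)/(k:ℝ)) ≤ f k := by
      rw [hBs, hf]
      exact le_ciSup (f := fun s : Fin k → Fin M =>
          N ((List.ofFn fun i => A (s i)).prod) ^ ((1:ℝ)/(k:ℝ)))
        (Set.Finite.bddAbove (Set.finite_range _)) (fun i : Fin k => σ i.rev)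
    have hlt2 : N (B k) ^ ((1:ℝ)/(k:ℝ)) ≤ r2 := ((hle.trans_lt hk).le).trans (le_max_left _ _)
    have heq : N (B k) = (N (B k) ^ ((1:ℝ)/(k:ℝ))) ^ k := by
      rw [← Real.rpow_natCast (N (B k) ^ ((1:ℝ)/(k:ℝ))) k, ← Real.rpow_mul (hnonneg _),
        one_div, inv_mul_cancel₀ (Nat.cast_ne_zero.mpr (by omega) : (k:ℝ) ≠ 0), Real.rpow_one]
    rw [heq]
    exact pow_le_pow_left₀ (Real.rpow_nonneg (hnonneg _) _) hlt2 k
  have hNto : Tendsto (fun k => N (B k)) atTop (nhds 0) :=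
    squeeze_zero' (Eventually.of_forall fun k => hnonneg _) hNB
      (tendsto_pow_atTop_nhds_zero_of_lt_one hr20 hr2lt)
  have hBto : Tendsto B atTop (nhds (0 : Fin n → Fin n → ℝ)) :=
    tendsto_zero_of_absNorm_tendsto_zero (E := Fin n → Fin n → ℝ) N hnonneg hdef htri hhom hNto
  have hent : ∀ i j, Tendsto (fun k => B k i j) atTop (nhds 0) := by
    intro i j
    have h1 := (tendsto_pi_nhds.1 hBto) i
    have h2 := (tendsto_pi_nhds.1 h1) j
    simpa using h2
  rw [tendsto_pi_nhds]
  intro i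
  have hmv : ∀ k, (B k).mulVec x0 i = ∑ j, B k i j * x0 j := by
    intro k
    simp [Matrix.mulVec, dotProduct]
  simp only [hmv, Pi.zero_apply]
  have := tendsto_finset_sum Finset.univ (fun j (_ : j ∈ Finset.univ) => (hent i j).mul_const (x0 j))
  show Tendsto (fun k => (B k).mulVec x0 i) atTop _
  simp only [hmv]
  simpa using this
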